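/- Let (O; Δ₁,…,Δ_N; n₁,…,n_N) be a triangulated object in ℝ³ with strictly positive albedo ρ : ∂O → (0,1], let u ∈ S², and let C[u] = (the frontier of S[u] in the subspace topology of ∂O) ∩ Φ. Then for every x ∈ C[u], the quantity t⋆(x,u) = inf{t > 0 : x + t·u ∈ ∂O} is finite (so the shadow retraction x^u = x + t⋆(x,u)·u exists and lies in ∂O), and moreover x^u ∈ E. -/

import Mathlib

open MeasureTheory
open scoped Classical
open scoped RealInnerProductSpace

/-- A point in ℝ³ (Euclidean). -/
abbrev E3 : Type := EuclideanSpace ℝ (Fin 3)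

/-- A triangulated object: a compact set `O ⊆ ℝ³` whose topological boundary is the union of
`N` triangles (each the convex hull of three affinely independent points), where two distinct
triangles intersect in the empty set, a common vertex, or a common edge, and each face carries
a unit normal orthogonal to the face. -/
structure TriangulatedObject (N : ℕ) where
  carrier : Set E3
  isCompact : IsCompact carrier
  v : Fin N → Fin 3 → E3
  indep : ∀ i, AffineIndependent ℝ (v i)
  normal : Fin N → E3
  normal_unit : ∀ i, ‖normal i‖ = 1
  normal_orth : ∀ i k₁ k₂, (inner ℝ (normal i) (v i k₁ - v i k₂) : ℝ) = 0
  boundary_eq : frontier carrier = ⋃ i, convexHull ℝ (Set.range (v i))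
  faces_inter : ∀ i j, i ≠ j →
    convexHull ℝ (Set.range (v i)) ∩ convexHull ℝ (Set.range (v j)) = ∅ ∨
    (∃ k₁ k₂, v i k₁ = v j k₂ ∧
      convexHull ℝ (Set.range (v i)) ∩ convexHull ℝ (Set.range (v j)) = {v i k₁}) ∨
    (∃ k₁ k₁' k₂ k₂', k₁ ≠ k₁' ∧ v i k₁ = v j k₂ ∧ v i k₁' = v j k₂' ∧
      convexHull ℝ (Set.range (v i)) ∩ convexHull ℝ (Set.range (v j))
        = segment ℝ (v i k₁) (v i k₁'))

namespace TriangulatedObject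

variable {N : ℕ}

/-- The `i`-th face Δᵢ. -/
def face (T : TriangulatedObject N) (i : Fin N) : Set E3 :=
  convexHull ℝ (Set.range (T.v i))

/-- The set `E` of edge points: union of all edges of all faces. -/
def edges (T : TriangulatedObject N) : Set E3 :=
  ⋃ i, ⋃ k₁, ⋃ k₂, ⋃ (_ : k₁ ≠ k₂), segment ℝ (T.v i k₁) (T.v i k₂)

/-- The boundary ∂O of the object. -/
def bdry (T : TriangulatedObject N) : Set E3 := frontier T.carrier

/-- The set Φ = ∂O \ E of face-interior points. -/
def Phi (T : TriangulatedObject N) : Set E3 := T.bdry \ T.edges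

/-- The outward normal at a boundary point: the normal of (the) face containing `x`
(for `x ∈ Φ` this face is unique); junk value `0` off the faces. -/
noncomputable def normalAt (T : TriangulatedObject N) (x : E3) : E3 :=
  if h : ∃ i, x ∈ T.face i then T.normal h.choose else 0

/-- The point-direction visibility indicator ν(x,u): 1 if the ray from `x` in direction `u`
meets `O` only at `x`, else 0. -/
noncomputable def vis (T : TriangulatedObject N) (x u : E3) : ℝ :=
  if {p : E3 | ∃ t : ℝ, 0 ≤ t ∧ p = x + t • u} ∩ T.carrier = {x} then 1 else 0

/-- The direct point-illumination irradiance D̄[u](x) = ρ(x)·⟨n(x),u⟩₊·ν(x,u) on Φ, 0 on E. -/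
noncomputable def Dbar (T : TriangulatedObject N) (ρ : E3 → ℝ) (u x : E3) : ℝ :=
  if x ∈ T.Phi then ρ x * max (inner ℝ (T.normalAt x) u : ℝ) 0 * T.vis x u else 0

/-- The shadowed region S[u] ⊆ ∂O. -/
def shadow (T : TriangulatedObject N) (ρ : E3 → ℝ) (u : E3) : Set E3 :=
  {x ∈ T.bdry | T.Dbar ρ u x = 0}

end TriangulatedObject

namespace TriangulatedObject

/-- The relative frontier of `S[u]` within the subspace topology of ∂O, intersected with Φ:
the boundaries of the cast shadows. -/
def castShadowBdry {N : ℕ} (T : TriangulatedObject N) (ρ : E3 → ℝ) (u : E3) : Set E3 :=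
  ((closure (T.shadow ρ u) ∩ T.bdry) ∩ (closure (T.bdry \ T.shadow ρ u) ∩ T.bdry)) ∩ T.Phi

end TriangulatedObject


-- ### auxiliary lemmas

lemma mem_convexHull_fin3 {f : Fin 3 → E3} {x : E3}
    (hx : x ∈ convexHull ℝ (Set.range f)) :
    ∃ w : Fin 3 → ℝ, (∀ k, 0 ≤ w k) ∧ (∑ k, w k) = 1 ∧ (∑ k, w k • f k) = x := by
  rw [convexHull_range_eq_exists_affineCombination] at hx
  obtain ⟨s, w, h0, h1, hc⟩ := hx
  refine ⟨(s : Set (Fin 3)).indicator w, ?_, ?_, ?_⟩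
  · intro k
    by_cases hk : k ∈ s
    · simp [Set.indicator_apply, hk, h0 k hk]
    · simp [Set.indicator_apply, hk]
  · have : (∑ k, (s : Set (Fin 3)).indicator w k) = ∑ k ∈ s, w k := by
      simp [Set.indicator_apply, Finset.sum_ite_mem]
    rw [this]; exact h1
  · have heq := Finset.affineCombination_indicator_subset w f s.subset_univ
    rw [hc] at heq
    have hsum1 : (∑ k, (s : Set (Fin 3)).indicator w k) = 1 := by
      have : (∑ k, (s : Set (Fin 3)).indicator w k) = ∑ k ∈ s, w k := by
        simp [Set.indicator_apply, Finset.sum_ite_mem]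
      rw [this]; exact h1
    rw [heq]
    exact (Finset.affineCombination_eq_linear_combination _ _ _ hsum1).symm


lemma exists_ne_fin3 (k : Fin 3) : ∃ k' : Fin 3, k ≠ k' := by
  by_cases h : k = 0
  · exact ⟨1, by simp [h]⟩
  · exact ⟨0, h⟩

lemma plane_nbhd_aux {v : Fin 3 → E3} (hv : AffineIndependent ℝ v) {m : E3}
    (hm : ‖m‖ = 1) (horth : ∀ k₁ k₂, (inner ℝ m (v k₁ - v k₂) : ℝ) = 0)
    {p : E3} (hp : p ∈ convexHull ℝ (Set.range v))
    (hpE : ∀ k₁ k₂ : Fin 3, k₁ ≠ k₂ → p ∉ segment ℝ (v k₁) (v k₂)) :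
    ∃ ε > 0, ∀ w : E3, (inner ℝ m (w - p) : ℝ) = 0 → ‖w - p‖ < ε →
      w ∈ convexHull ℝ (Set.range v) := by
  have hm0 : m ≠ 0 := by intro h; rw [h, norm_zero] at hm; norm_num at hm
  set d₁ : E3 := v 1 - v 0 with hd₁
  set d₂ : E3 := v 2 - v 0 with hd₂
  -- the linear map (a,b) ↦ a•d₁+b•d₂
  set φ : (ℝ × ℝ) →ₗ[ℝ] E3 :=
    { toFun := fun c => c.1 • d₁ + c.2 • d₂
      map_add' := by intro a b; simp [add_smul]; abel
      map_smul' := by intro c a; simp [smul_smul, smul_add] } with hφ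
  have hφ_apply : ∀ c : ℝ × ℝ, φ c = c.1 • d₁ + c.2 • d₂ := fun c => rfl
  -- injectivity
  have hinj : Function.Injective φ := by
    rw [← LinearMap.ker_eq_bot, LinearMap.ker_eq_bot']
    intro c hc
    have h3 := affineIndependent_iff.mp hv Finset.univ ![-(c.1 + c.2), c.1, c.2]
      (by simp [Fin.sum_univ_three])
      (by
        rw [Fin.sum_univ_three]
        have e0 : (![-(c.1 + c.2), c.1, c.2] : Fin 3 → ℝ) 0 = -(c.1 + c.2) := rfl
        have e1 : (![-(c.1 + c.2), c.1, c.2] : Fin 3 → ℝ) 1 = c.1 := rfl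
        have e2 : (![-(c.1 + c.2), c.1, c.2] : Fin 3 → ℝ) 2 = c.2 := rfl
        rw [e0, e1, e2]
        rw [hφ_apply] at hc
        rw [hd₁, hd₂] at hc
        have horw : -(c.1 + c.2) • v 0 + c.1 • v 1 + c.2 • v 2
            = c.1 • (v 1 - v 0) + c.2 • (v 2 - v 0) := by
          simp [smul_sub, add_smul, neg_smul]; abel
        rw [horw, hc])
    have h1 : c.1 = 0 := by simpa using h3 1 (Finset.mem_univ _)
    have h2 : c.2 = 0 := by simpa using h3 2 (Finset.mem_univ _)
    exact Prod.ext h1 h2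
  -- range φ = orthogonal complement of span m
  have hrange : LinearMap.range φ = (ℝ ∙ m)ᗮ := by
    apply Submodule.eq_of_le_of_finrank_eq
    · rintro z ⟨c, rfl⟩
      rw [Submodule.mem_orthogonal_singleton_iff_inner_right]
      rw [hφ_apply, inner_add_right, real_inner_smul_right, real_inner_smul_right,
        hd₁, hd₂, horth 1 0, horth 2 0]
      ring
    · have h1 : Module.finrank ℝ (LinearMap.range φ) = 2 := by
        rw [LinearMap.finrank_range_of_inj hinj]
        simp [Module.finrank_prod]
      have h2 : Module.finrank ℝ ((ℝ ∙ m)ᗮ) = 2 := by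
        have := Submodule.finrank_add_finrank_orthogonal (K := (ℝ ∙ m))
        rw [finrank_span_singleton hm0] at this
        have h3 : Module.finrank ℝ E3 = 3 := finrank_euclideanSpace_fin
        omega
      rw [h1, h2]
  -- barycentric coordinates of p are strictly positive
  obtain ⟨lam, hlam0, hlam1, hlamp⟩ := mem_convexHull_fin3 hp
  have hlam_pos : ∀ k, 0 < lam k := by
    intro k
    rcases lt_or_eq_of_le (hlam0 k) with h | h
    · exact h
    exfalso
    fin_cases k
    · refine hpE 1 2 (by decide) ?_
      have h0 : lam 0 = 0 := by simpa using h.symm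
      refine ⟨lam 1, lam 2, hlam0 1, hlam0 2, ?_, ?_⟩
      · rw [Fin.sum_univ_three] at hlam1; rw [h0] at hlam1; linarith
      · rw [Fin.sum_univ_three] at hlamp; rw [h0] at hlamp
        rw [← hlamp]; simp
    · refine hpE 0 2 (by decide) ?_
      have h0 : lam 1 = 0 := by simpa using h.symm
      refine ⟨lam 0, lam 2, hlam0 0, hlam0 2, ?_, ?_⟩
      · rw [Fin.sum_univ_three] at hlam1; rw [h0] at hlam1; linarith
      · rw [Fin.sum_univ_three] at hlamp; rw [h0] at hlamp
        rw [← hlamp]; simp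
    · refine hpE 0 1 (by decide) ?_
      have h0 : lam 2 = 0 := by simpa using h.symm
      refine ⟨lam 0, lam 1, hlam0 0, hlam0 1, ?_, ?_⟩
      · rw [Fin.sum_univ_three] at hlam1; rw [h0] at hlam1; linarith
      · rw [Fin.sum_univ_three] at hlamp; rw [h0] at hlamp
        rw [← hlamp]; simp
  set lmin : ℝ := min (lam 0) (min (lam 1) (lam 2)) with hlmin
  have hlmin_pos : 0 < lmin := lt_min (hlam_pos 0) (lt_min (hlam_pos 1) (hlam_pos 2))
  -- inverse of φ, continuous
  set ψ := (LinearEquiv.ofInjective φ hinj).symm with hψ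
  have hψ_cont : Continuous ψ := LinearMap.continuous_of_finiteDimensional ψ.toLinearMap
  have hψ0 : ψ 0 = 0 := map_zero ψ
  obtain ⟨δ, hδ_pos, hδ⟩ := Metric.continuousAt_iff.mp hψ_cont.continuousAt (lmin / 2)
    (by positivity)
  refine ⟨δ, hδ_pos, ?_⟩
  intro w hw_orth hw_near
  have hz_mem : w - p ∈ LinearMap.range φ := by
    rw [hrange, Submodule.mem_orthogonal_singleton_iff_inner_right]
    exact hw_orth
  set z : LinearMap.range φ := ⟨w - p, hz_mem⟩ with hz
  have hdistz : dist z 0 < δ := by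
    rw [dist_zero_right]
    rw [show ‖z‖ = ‖w - p‖ from rfl]
    exact hw_near
  have hcb : dist (ψ z) (ψ 0) < lmin / 2 := hδ hdistz
  rw [hψ0, dist_zero_right] at hcb
  set c : ℝ × ℝ := ψ z with hc
  have hrec : φ c = w - p := by
    have h := (LinearEquiv.ofInjective φ hinj).apply_symm_apply z
    have h2 := congrArg Subtype.val h
    rw [LinearEquiv.ofInjective_apply] at h2
    exact h2
  have hc1 : |c.1| < lmin / 2 := lt_of_le_of_lt ((by simpa [Real.norm_eq_abs] using norm_fst_le c : |c.1| ≤ ‖c‖)) hcb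
  have hc2 : |c.2| < lmin / 2 := lt_of_le_of_lt ((by simpa [Real.norm_eq_abs] using norm_snd_le c : |c.2| ≤ ‖c‖)) hcb
  -- build weights
  set μ : Fin 3 → ℝ := ![lam 0 - c.1 - c.2, lam 1 + c.1, lam 2 + c.2] with hμ
  have hl0 : lmin ≤ lam 0 := min_le_left _ _
  have hl1 : lmin ≤ lam 1 := le_trans (min_le_right _ _) (min_le_left _ _)
  have hl2 : lmin ≤ lam 2 := le_trans (min_le_right _ _) (min_le_right _ _)
  have habs1 := abs_lt.mp hc1
  have habs2 := abs_lt.mp hc2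
  apply mem_convexHull_of_exists_fintype μ v
  · intro k
    fin_cases k
    · show 0 ≤ lam 0 - c.1 - c.2; obtain ⟨a,b⟩ := habs1; obtain ⟨a2,b2⟩ := habs2; linarith
    · show 0 ≤ lam 1 + c.1; obtain ⟨a,b⟩ := habs1; linarith
    · show 0 ≤ lam 2 + c.2; obtain ⟨a,b⟩ := habs2; linarith
  · rw [Fin.sum_univ_three]
    show lam 0 - c.1 - c.2 + (lam 1 + c.1) + (lam 2 + c.2) = 1
    rw [Fin.sum_univ_three] at hlam1; linarith
  · exact fun k => Set.mem_range_self k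
  · rw [Fin.sum_univ_three]
    show (lam 0 - c.1 - c.2) • v 0 + (lam 1 + c.1) • v 1 + (lam 2 + c.2) • v 2 = w
    rw [hφ_apply, hd₁, hd₂] at hrec
    rw [Fin.sum_univ_three] at hlamp
    have hfin : (lam 0 - c.1 - c.2) • v 0 + (lam 1 + c.1) • v 1 + (lam 2 + c.2) • v 2
        = (lam 0 • v 0 + lam 1 • v 1 + lam 2 • v 2) + (c.1 • (v 1 - v 0) + c.2 • (v 2 - v 0)) := by
      simp [sub_smul, add_smul, smul_sub]; abel
    rw [hfin, hlamp, hrec]; abel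


namespace TriangulatedObject
variable {N : ℕ} (T : TriangulatedObject N)

lemma face_def (i : Fin N) : T.face i = convexHull ℝ (Set.range (T.v i)) := rfl

lemma face_closed (i : Fin N) : IsClosed (T.face i) :=
  ((Set.finite_range (T.v i)).isCompact_convexHull ℝ).isClosed

lemma segment_closed (a b : E3) : IsClosed (segment ℝ a b) := by
  rw [← convexHull_pair]
  exact (((Set.finite_singleton b).insert a).isCompact_convexHull ℝ).isClosed

lemma edges_closed : IsClosed T.edges := by
  refine isClosed_iUnion_of_finite fun i => isClosed_iUnion_of_finite fun k₁ =>
    isClosed_iUnion_of_finite fun k₂ => isClosed_iUnion_of_finite fun _ =>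
      segment_closed _ _

lemma vertex_mem_edges (i : Fin N) (k : Fin 3) : T.v i k ∈ T.edges := by
  obtain ⟨k', hk'⟩ := exists_ne_fin3 k
  exact Set.mem_iUnion.2 ⟨i, Set.mem_iUnion.2 ⟨k, Set.mem_iUnion.2 ⟨k',
    Set.mem_iUnion.2 ⟨hk', left_mem_segment ℝ _ _⟩⟩⟩⟩

lemma unique_face {x : E3} {i j : Fin N} (hx : x ∈ T.Phi) (hi : x ∈ T.face i)
    (hj : x ∈ T.face j) : i = j := by
  by_contra hne
  have hmem : x ∈ convexHull ℝ (Set.range (T.v i)) ∩ convexHull ℝ (Set.range (T.v j)) :=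
    ⟨hi, hj⟩
  rcases T.faces_inter i j hne with h | ⟨k₁, k₂, hvv, h⟩ | ⟨k₁, k₁', k₂, k₂', hkk, hv1, hv2, h⟩
  · rw [h] at hmem; exact hmem
  · rw [h] at hmem
    exact hx.2 (hmem ▸ T.vertex_mem_edges i k₁)
  · rw [h] at hmem
    exact hx.2 (Set.mem_iUnion.2 ⟨i, Set.mem_iUnion.2 ⟨k₁, Set.mem_iUnion.2 ⟨k₁',
      Set.mem_iUnion.2 ⟨hkk, hmem⟩⟩⟩⟩)

lemma face_subset_bdry (i : Fin N) : T.face i ⊆ T.bdry := by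
  intro x hx
  rw [bdry, T.boundary_eq]
  exact Set.mem_iUnion.2 ⟨i, hx⟩

lemma mem_face_of_bdry {x : E3} (hx : x ∈ T.bdry) : ∃ i, x ∈ T.face i := by
  rw [bdry, T.boundary_eq] at hx
  exact Set.mem_iUnion.1 hx

lemma normalAt_eq {x : E3} {i : Fin N} (hx : x ∈ T.Phi) (hi : x ∈ T.face i) :
    T.normalAt x = T.normal i := by
  have h : ∃ j, x ∈ T.face j := ⟨i, hi⟩
  rw [normalAt, dif_pos h]
  exact congrArg T.normal (T.unique_face hx h.choose_spec hi)

lemma face_plane {i : Fin N} {y z : E3} (hy : y ∈ T.face i) (hz : z ∈ T.face i) :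
    (inner ℝ (T.normal i) (y - z) : ℝ) = 0 := by
  obtain ⟨wy, _, hwy1, hwyc⟩ := mem_convexHull_fin3 hy
  obtain ⟨wz, _, hwz1, hwzc⟩ := mem_convexHull_fin3 hz
  have hvc : ∀ k, (inner ℝ (T.normal i) (T.v i k) : ℝ) = inner ℝ (T.normal i) (T.v i 0) := by
    intro k
    have := T.normal_orth i k 0
    rw [inner_sub_right] at this
    linarith
  have hy' : (inner ℝ (T.normal i) y : ℝ) = inner ℝ (T.normal i) (T.v i 0) := by
    rw [← hwyc, inner_sum]
    simp_rw [real_inner_smul_right, hvc]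
    rw [← Finset.sum_mul, hwy1, one_mul]
  have hz' : (inner ℝ (T.normal i) z : ℝ) = inner ℝ (T.normal i) (T.v i 0) := by
    rw [← hwzc, inner_sum]
    simp_rw [real_inner_smul_right, hvc]
    rw [← Finset.sum_mul, hwz1, one_mul]
  rw [inner_sub_right, hy', hz', sub_self]

end TriangulatedObject

theorem stmt8 {N : ℕ} (T : TriangulatedObject N) (ρ : E3 → ℝ)
    (hρ : ∀ x ∈ T.bdry, 0 < ρ x ∧ ρ x ≤ 1)
    (u : E3) (hu : ‖u‖ = 1) :
    ∀ x ∈ T.castShadowBdry ρ u,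
      ({t : ℝ | 0 < t ∧ x + t • u ∈ T.bdry}).Nonempty ∧
      x + sInf {t : ℝ | 0 < t ∧ x + t • u ∈ T.bdry} • u ∈ T.edges := by
  intro x hx
  obtain ⟨⟨⟨hxS, hxB⟩, hxNS, _⟩, hxΦ⟩ := hx
  set O := T.carrier with hO
  have hOc : IsClosed O := T.isCompact.isClosed
  have hBO : T.bdry ⊆ O := by
    intro y hy
    have h1 : y ∈ closure O := frontier_subset_closure hy
    rwa [hOc.closure_eq] at h1
  have hu0 : u ≠ 0 := by intro h; rw [h, norm_zero] at hu; norm_num at hu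
  obtain ⟨i, hxi⟩ := T.mem_face_of_bdry hxB
  set n := T.normal i with hn
  have hxE : x ∉ T.edges := hxΦ.2
  -- small radius r around x
  set C : Set E3 := ⋃ j, ⋃ (_ : j ≠ i), T.face j with hC
  have hCc : IsClosed C :=
    isClosed_iUnion_of_finite fun j => isClosed_iUnion_of_finite fun _ => T.face_closed j
  have hxC : x ∉ C := by
    intro h
    obtain ⟨j, hj⟩ := Set.mem_iUnion.1 h
    obtain ⟨hne, hmem⟩ := Set.mem_iUnion.1 hj
    exact hne (T.unique_face hxΦ hmem hxi)
  obtain ⟨r2, hr2pos, hr2⟩ := Metric.isOpen_iff.1 (hCc.union T.edges_closed).isOpen_compl x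
    (by simp [hxC, hxE])
  set r := r2 / 2 with hr
  have hrpos : 0 < r := by positivity
  have h2r : 2 * r = r2 := by rw [hr]; ring
  have hlocal : ∀ y, y ∈ T.bdry → dist y x < 2 * r → y ∈ T.face i ∧ y ∉ T.edges := by
    intro y hyB hyd
    have hyball : y ∈ Metric.ball x r2 := by rw [Metric.mem_ball, ← h2r]; exact hyd
    have hyc := hr2 hyball
    simp only [Set.mem_compl_iff, Set.mem_union] at hyc
    push_neg at hyc
    obtain ⟨j, hj⟩ := T.mem_face_of_bdry hyB
    have hij : j = i := by
      by_contra hne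
      exact hyc.1 (Set.mem_iUnion.2 ⟨j, Set.mem_iUnion.2 ⟨hne, hj⟩⟩)
    exact ⟨hij ▸ hj, hyc.2⟩
  -- lit points arbitrarily close
  have hlit : ∀ ε > (0:ℝ), ∃ y, dist x y < ε ∧ y ∈ T.bdry ∧
      ({p : E3 | ∃ t : ℝ, 0 ≤ t ∧ p = y + t • u} ∩ O = {y}) := by
    intro ε hε
    obtain ⟨y, ⟨hyB, hyS⟩, hyd⟩ := Metric.mem_closure_iff.1 hxNS ε hε
    refine ⟨y, hyd, hyB, ?_⟩
    by_contra hray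
    apply hyS
    refine ⟨hyB, ?_⟩
    rw [TriangulatedObject.Dbar]
    split
    · rw [TriangulatedObject.vis, if_neg hray]; ring
    · rfl
  -- the normal component of u is positive
  have hc : 0 < (inner ℝ n u : ℝ) := by
    by_contra hcc
    push_neg at hcc
    have hmax : max (inner ℝ n u : ℝ) 0 = 0 := max_eq_right hcc
    obtain ⟨y, ⟨hyB, hyS⟩, hyd⟩ := Metric.mem_closure_iff.1 hxNS (2 * r) (by positivity)
    have hy' := hlocal y hyB (by rw [dist_comm]; exact hyd)
    apply hyS
    refine ⟨hyB, ?_⟩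
    have hyPhi : y ∈ T.Phi := ⟨hyB, hy'.2⟩
    rw [TriangulatedObject.Dbar, if_pos hyPhi,
      T.normalAt_eq hyPhi hy'.1, ← hn, hmax]
    ring
  -- the upper half ball is outside O
  have hH : ∀ w, dist w x < 2 * r → 0 < (inner ℝ n (w - x) : ℝ) → w ∉ O := by
    set H := {w : E3 | dist w x < 2 * r ∧ 0 < (inner ℝ n (w - x) : ℝ)} with hHdef
    have hHconv : Convex ℝ H := by
      have heq : H = Metric.ball x (2 * r) ∩ {w | (inner ℝ n x : ℝ) < inner ℝ n w} := by
        ext w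
        simp only [hHdef, Set.mem_setOf_eq, Set.mem_inter_iff, Metric.mem_ball,
          inner_sub_right, sub_pos]
      rw [heq]
      refine (convex_ball x _).inter (convex_halfSpace_gt ?_ _)
      exact ⟨fun a b => inner_add_right _ _ _, fun c y => real_inner_smul_right _ _ _⟩
    have hHsub : H ⊆ interior O ∪ (closure O)ᶜ := by
      intro w hw
      by_cases hcl : w ∈ closure O
      · left
        by_contra hint
        have hwB : w ∈ T.bdry := ⟨hcl, hint⟩
        have hwf := (hlocal w hwB hw.1).1
        have := T.face_plane hwf hxi
        rw [← hn] at this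
        exact absurd hw.2 (by rw [this]; norm_num)
      · right; exact hcl
    have hdisj : Disjoint (interior O) (closure O)ᶜ := by
      rw [Set.disjoint_left]
      intro w hw hw2
      exact hw2 (subset_closure (interior_subset hw))
    -- a point of H outside O
    obtain ⟨y0, hy0d, hy0B, hy0ray⟩ := hlit r hrpos
    have hy0f := hlocal y0 hy0B (by rw [dist_comm]; exact lt_trans hy0d (by linarith))
    set w0 := y0 + r • u with hw0
    have hw0H : w0 ∈ H := by
      constructor
      · calc dist w0 x ≤ dist w0 y0 + dist y0 x := dist_triangle _ _ _
          _ < r + r := by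
              refine add_lt_add_of_le_of_lt ?_ (by rw [dist_comm]; exact hy0d)
              rw [hw0, dist_eq_norm]
              simp only [add_sub_cancel_left]
              rw [norm_smul, hu, mul_one, Real.norm_eq_abs]
              exact le_of_eq (abs_of_pos hrpos)
          _ = 2 * r := by ring
      · have h1 : w0 - x = (y0 - x) + r • u := by rw [hw0]; abel
        have h2 := T.face_plane hy0f.1 hxi
        rw [← hn] at h2
        rw [h1, inner_add_right, h2, real_inner_smul_right, zero_add]
        exact mul_pos hrpos hc
    have hw0O : w0 ∉ O := by
      intro h
      have hmem : w0 ∈ {p : E3 | ∃ t : ℝ, 0 ≤ t ∧ p = y0 + t • u} ∩ O :=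
        ⟨⟨r, le_of_lt hrpos, rfl⟩, h⟩
      rw [hy0ray] at hmem
      have heq := Set.mem_singleton_iff.1 hmem
      rw [hw0] at heq
      have : r • u = 0 := by
        have := add_eq_left.1 heq
        exact this
      rcases smul_eq_zero.1 this with h' | h'
      · exact absurd h' (ne_of_gt hrpos)
      · exact hu0 h'
    rcases hHconv.isPreconnected.subset_or_subset isOpen_interior
      isClosed_closure.isOpen_compl hdisj hHsub with h | h
    · exact absurd (interior_subset (h hw0H)) hw0O
    · intro w hwd hwi hwO
      exact (h ⟨hwd, hwi⟩) (subset_closure hwO)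
  -- shadowed points arbitrarily close, with their occluder hits
  have hseq : ∀ k : ℕ, ∃ z, dist x z < min r (1 / (k + 1)) ∧ z ∈ T.shadow ρ u := by
    intro k
    obtain ⟨z, hz, hzd⟩ := Metric.mem_closure_iff.1 hxS (min r (1 / (k + 1)))
      (lt_min hrpos (by positivity))
    exact ⟨z, hzd, hz⟩
  choose z hzd hzS using hseq
  have hzB : ∀ k, z k ∈ T.bdry := fun k => (hzS k).1
  have hzr : ∀ k, dist (z k) x < r := fun k => by
    rw [dist_comm]; exact lt_of_lt_of_le (hzd k) (min_le_left _ _)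
  have hzf : ∀ k, z k ∈ T.face i ∧ z k ∉ T.edges := fun k =>
    hlocal _ (hzB k) (lt_trans (hzr k) (by linarith))
  have hs_ex : ∀ k, ∃ s : ℝ, 0 < s ∧ z k + s • u ∈ O := by
    intro k
    have hzvis : {p : E3 | ∃ t : ℝ, 0 ≤ t ∧ p = z k + t • u} ∩ O ≠ {z k} := by
      intro heq
      have hDz := (hzS k).2
      have hzPhi : z k ∈ T.Phi := ⟨hzB k, (hzf k).2⟩
      rw [TriangulatedObject.Dbar, if_pos hzPhi,
        T.normalAt_eq hzPhi (hzf k).1, ← hn,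
        TriangulatedObject.vis, if_pos heq, mul_one,
        max_eq_left (le_of_lt hc)] at hDz
      exact absurd hDz (ne_of_gt (mul_pos (hρ _ (hzB k)).1 hc))
    have hsub : {z k} ⊆ {p : E3 | ∃ t : ℝ, 0 ≤ t ∧ p = z k + t • u} ∩ O := by
      intro w hw
      rw [Set.mem_singleton_iff] at hw
      subst hw
      exact ⟨⟨0, le_refl 0, by simp⟩, hBO (hzB k)⟩
    obtain ⟨w, hwmem, hwne⟩ := Set.exists_of_ssubset (hsub.ssubset_of_ne (Ne.symm hzvis))
    obtain ⟨⟨t, ht0, rfl⟩, hwO⟩ := hwmem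
    refine ⟨t, ?_, hwO⟩
    rcases lt_or_eq_of_le ht0 with h | h
    · exact h
    · exfalso; apply hwne; rw [← h]; simp
  choose s hs_pos hsO using hs_ex
  obtain ⟨R, hR⟩ := T.isCompact.isBounded.subset_closedBall 0
  have hsb : ∀ k, s k ∈ Set.Icc r (R + ‖x‖ + r) := by
    intro k
    constructor
    · by_contra hlt
      push_neg at hlt
      refine hH (z k + s k • u) ?_ ?_ (hsO k)
      · calc dist (z k + s k • u) x ≤ dist (z k + s k • u) (z k) + dist (z k) x :=
              dist_triangle _ _ _
          _ < r + r := by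
              refine add_lt_add_of_le_of_lt ?_ (hzr k)
              rw [dist_eq_norm]
              simp only [add_sub_cancel_left]
              rw [norm_smul, hu, mul_one, Real.norm_eq_abs, abs_of_pos (hs_pos k)]
              exact le_of_lt hlt
          _ = 2 * r := by ring
      · have h1 : z k + s k • u - x = (z k - x) + s k • u := by abel
        have h2 := T.face_plane (hzf k).1 hxi
        rw [← hn] at h2
        rw [h1, inner_add_right, h2, real_inner_smul_right, zero_add]
        exact mul_pos (hs_pos k) hc
    · have h1 : ‖z k + s k • u‖ ≤ R := by
        have := hR (hsO k)
        rwa [Metric.mem_closedBall, dist_zero_right] at this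
      have h2 : ‖z k‖ ≤ ‖x‖ + r := by
        calc ‖z k‖ = ‖(z k - x) + x‖ := by congr 1; abel
          _ ≤ ‖z k - x‖ + ‖x‖ := norm_add_le _ _
          _ ≤ ‖x‖ + r := by
              rw [← dist_eq_norm]
              have := le_of_lt (hzr k)
              linarith
      calc s k = ‖s k • u‖ := by rw [norm_smul, hu, mul_one, Real.norm_eq_abs, abs_of_pos (hs_pos k)]
        _ = ‖(z k + s k • u) - z k‖ := by congr 1; abel
        _ ≤ ‖z k + s k • u‖ + ‖z k‖ := norm_sub_le _ _
        _ ≤ R + (‖x‖ + r) := add_le_add h1 h2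
        _ = R + ‖x‖ + r := by ring
  obtain ⟨t₀, ht₀mem, φ, hφmono, hφtend⟩ := isCompact_Icc.tendsto_subseq hsb
  have hz_tend : Filter.Tendsto z Filter.atTop (nhds x) := by
    rw [tendsto_iff_dist_tendsto_zero]
    refine squeeze_zero (fun k => dist_nonneg) (fun k => ?_)
      tendsto_one_div_add_atTop_nhds_zero_nat
    rw [dist_comm]
    exact le_of_lt (lt_of_lt_of_le (hzd k) (min_le_right _ _))
  have hq_tend : Filter.Tendsto (fun k => z (φ k) + s (φ k) • u) Filter.atTop
      (nhds (x + t₀ • u)) :=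
    (hz_tend.comp hφmono.tendsto_atTop).add (hφtend.smul_const u)
  have hhit : x + t₀ • u ∈ O :=
    hOc.mem_of_tendsto hq_tend (Filter.Eventually.of_forall fun k => hsO (φ k))
  have ht₀r : r ≤ t₀ := ht₀mem.1
  -- the first hitting time τ
  set AO := {t : ℝ | r ≤ t ∧ x + t • u ∈ O} with hAO
  have hAOne : AO.Nonempty := ⟨t₀, ht₀r, hhit⟩
  have hAObdd : BddBelow AO := ⟨r, fun t ht => ht.1⟩
  have hAOclosed : IsClosed AO := by
    have heq : AO = Set.Ici r ∩ (fun t : ℝ => x + t • u) ⁻¹' O := rfl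
    rw [heq]
    exact isClosed_Ici.inter (hOc.preimage (continuous_const.add
      (continuous_id.smul continuous_const)))
  set τ := sInf AO with hτ
  have hτmem : τ ∈ AO := hAOclosed.csInf_mem hAOne hAObdd
  have hτr : r ≤ τ := hτmem.1
  have hτpos : 0 < τ := lt_of_lt_of_le hrpos hτr
  set p := x + τ • u with hp
  have hpO : p ∈ O := hτmem.2
  have hmiss : ∀ s', 0 < s' → s' < τ → x + s' • u ∉ O := by
    intro s' h0 hlt hmem
    rcases lt_or_ge s' r with h | h
    · refine hH (x + s' • u) ?_ ?_ hmem
      · rw [dist_eq_norm]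
        simp only [add_sub_cancel_left]
        rw [norm_smul, hu, mul_one, Real.norm_eq_abs, abs_of_pos h0]
        linarith
      · simp only [add_sub_cancel_left]
        rw [real_inner_smul_right]
        exact mul_pos h0 hc
    · exact absurd (csInf_le hAObdd ⟨h, hmem⟩) (not_le.2 hlt)
  have hpfr : p ∈ T.bdry := by
    have h1 : p ∈ closure O := subset_closure hpO
    have h2 : p ∈ closure Oᶜ := by
      rw [Metric.mem_closure_iff]
      intro ε hε
      set s' := max (τ - ε / 2) (τ / 2) with hs'
      have hs'pos : 0 < s' := lt_of_lt_of_le (by positivity) (le_max_right _ _)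
      have hs'lt : s' < τ := max_lt (by linarith) (by linarith)
      refine ⟨x + s' • u, hmiss s' hs'pos hs'lt, ?_⟩
      rw [dist_eq_norm]
      have heq : p - (x + s' • u) = (τ - s') • u := by rw [hp, sub_smul]; abel
      rw [heq, norm_smul, hu, mul_one, Real.norm_eq_abs, abs_of_pos (by linarith)]
      have hge := le_max_left (τ - ε / 2) (τ / 2)
      linarith
    show p ∈ frontier O
    rw [frontier_eq_closure_inter_closure]
    exact ⟨h1, h2⟩
  set A := {t : ℝ | 0 < t ∧ x + t • u ∈ T.bdry} with hA
  have hAsub : A ⊆ AO := by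
    intro t ht
    refine ⟨?_, hBO ht.2⟩
    by_contra hlt
    push_neg at hlt
    refine absurd (hBO ht.2) (hH (x + t • u) ?_ ?_)
    · rw [dist_eq_norm]
      simp only [add_sub_cancel_left]
      rw [norm_smul, hu, mul_one, Real.norm_eq_abs, abs_of_pos ht.1]
      linarith
    · simp only [add_sub_cancel_left]
      rw [real_inner_smul_right]
      exact mul_pos ht.1 hc
  have hτA : τ ∈ A := ⟨hτpos, hpfr⟩
  have hAbdd : BddBelow A := ⟨r, fun t ht => (hAsub ht).1⟩
  have hIA : sInf A = τ :=
    le_antisymm (csInf_le hAbdd hτA)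
      (le_csInf ⟨τ, hτA⟩ fun t ht => csInf_le hAObdd (hAsub ht))
  refine ⟨⟨τ, hτA⟩, ?_⟩
  rw [hIA]
  -- now show p = x + τ • u lies on an edge
  by_contra hpE
  obtain ⟨j, hpj⟩ := T.mem_face_of_bdry hpfr
  set m := T.normal j with hm
  have hpE' : ∀ k₁ k₂ : Fin 3, k₁ ≠ k₂ → p ∉ segment ℝ (T.v j k₁) (T.v j k₂) := by
    intro k₁ k₂ hk hseg
    exact hpE (Set.mem_iUnion.2 ⟨j, Set.mem_iUnion.2 ⟨k₁, Set.mem_iUnion.2 ⟨k₂,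
      Set.mem_iUnion.2 ⟨hk, hseg⟩⟩⟩⟩)
  obtain ⟨ε, hεpos, hQ⟩ := plane_nbhd_aux (T.indep j) (T.normal_unit j)
    (fun k₁ k₂ => T.normal_orth j k₁ k₂) hpj hpE'
  set cm := (inner ℝ m u : ℝ) with hcm
  by_cases hmu : cm = 0
  · -- ray tangent to the face plane: contradiction with hmiss
    set s' := max (τ - ε / 2) (τ / 2) with hs'
    have hs'pos : 0 < s' := lt_of_lt_of_le (by positivity) (le_max_right _ _)
    have hs'lt : s' < τ := max_lt (by linarith) (by linarith)
    have heq : (x + s' • u) - p = (s' - τ) • u := by rw [hp, sub_smul]; abel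
    have hw : x + s' • u ∈ T.face j := by
      apply hQ
      · rw [heq, real_inner_smul_right, ← hcm, hmu, mul_zero]
      · rw [heq, norm_smul, hu, mul_one, Real.norm_eq_abs, abs_of_neg (by linarith)]
        have hge := le_max_left (τ - ε / 2) (τ / 2)
        linarith
    exact hmiss s' hs'pos hs'lt (hBO (T.face_subset_bdry j hw))
  · -- transversal ray: nearby lit point's ray would hit the face
    have hcmabs : 0 < |cm| := abs_pos.2 hmu
    set δ := min (τ * |cm|) (min (ε / 2) (ε / 2 * |cm|)) with hδ
    have hδpos : 0 < δ :=
      lt_min (by positivity) (lt_min (by positivity) (by positivity))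
    obtain ⟨y, hyd, hyB, hyray⟩ := hlit δ hδpos
    set a := (inner ℝ m (y - x) : ℝ) with ha
    have hyx : ‖y - x‖ < δ := by rw [← dist_eq_norm, dist_comm]; exact hyd
    have haabs : |a| ≤ ‖y - x‖ := by
      calc |a| ≤ ‖m‖ * ‖y - x‖ := abs_real_inner_le_norm m (y - x)
        _ = ‖y - x‖ := by rw [hm, T.normal_unit j, one_mul]
    set t' := τ - a / cm with ht'
    have hadiv : |a / cm| < τ := by
      rw [abs_div, div_lt_iff₀ hcmabs]
      calc |a| ≤ ‖y - x‖ := haabs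
        _ < δ := hyx
        _ ≤ τ * |cm| := min_le_left _ _
    have ht'pos : 0 < t' := by
      have := (abs_lt.1 hadiv).2
      rw [ht']; linarith
    set π := y + t' • u with hπ
    have heqd : π - p = (y - x) + (t' - τ) • u := by rw [hπ, hp]; module
    have ht'τ : t' - τ = -(a / cm) := by rw [ht']; ring
    have hπQ : (inner ℝ m (π - p) : ℝ) = 0 := by
      rw [heqd, inner_add_right, real_inner_smul_right, ← ha, ← hcm, ht'τ,
        neg_mul, div_mul_cancel₀ a hmu]
      ring
    have hπnear : ‖π - p‖ < ε := by
      have hb1 : ‖y - x‖ < ε / 2 :=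
        lt_of_lt_of_le hyx (le_trans (min_le_right _ _) (min_le_left _ _))
      have hb2 : |a / cm| < ε / 2 := by
        rw [abs_div, div_lt_iff₀ hcmabs]
        calc |a| ≤ ‖y - x‖ := haabs
          _ < δ := hyx
          _ ≤ ε / 2 * |cm| := le_trans (min_le_right _ _) (min_le_right _ _)
      calc ‖π - p‖ ≤ ‖y - x‖ + ‖(t' - τ) • u‖ := by rw [heqd]; exact norm_add_le _ _
        _ = ‖y - x‖ + |a / cm| := by rw [norm_smul, hu, mul_one, Real.norm_eq_abs, ht'τ, abs_neg]
        _ < ε / 2 + ε / 2 := add_lt_add hb1 hb2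
        _ = ε := by ring
    have hπface : π ∈ T.face j := hQ π hπQ hπnear
    have hπO : π ∈ O := hBO (T.face_subset_bdry j hπface)
    have hmem : π ∈ {p : E3 | ∃ t : ℝ, 0 ≤ t ∧ p = y + t • u} ∩ O :=
      ⟨⟨t', le_of_lt ht'pos, rfl⟩, hπO⟩
    rw [hyray] at hmem
    have heqy := Set.mem_singleton_iff.1 hmem
    rw [hπ] at heqy
    have hzero : t' • u = 0 := add_eq_left.1 heqy
    rcases smul_eq_zero.1 hzero with h' | h'
    · exact absurd h' (ne_of_gt ht'pos)
    · exact hu0 h'
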